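/- For every L-formula φ(v₁,…,vₙ) that has a realization in ℕ⁺, and every tuple c̄ ∈ (ℕ⁺)^k, there exists a tuple ā ∈ (ℕ⁺)ⁿ such that ℕ⁺ ⊨ φ(ā) and σ(ā) ∩ σ(c̄) = ∅ (no prime divides both a component of ā and a component of c̄). -/
import Mathlib

open FirstOrder Language

/-- The language `L` with one binary function symbol `·` and one constant symbol `1`. -/
def L : FirstOrder.Language :=
  ⟨fun n => match n with | 0 => Unit | 2 => Unit | _ => Empty, fun _ => Empty⟩

/-- Any monoid is an `L`-structure, with `·` interpreted as multiplication and `1` as the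
identity. In particular `ℕ+` is the standard model of Skolem arithmetic, and
`Multiplicative ℕ` is the additive `L`-structure `(ℕ, +, 0)`. -/
instance (M : Type*) [Monoid M] : L.Structure M where
  funMap {n} f x :=
    match n, f, x with
    | 0, _, _ => 1
    | 2, _, x => x 0 * x 1
  RelMap r _ := r.elim

namespace CRaux

noncomputable def F (e : ℕ → ℕ) (n : ℕ) : ℕ := n.factorization.prod fun p k => (e p) ^ k

variable {e : ℕ → ℕ} (he : ∀ p : ℕ, p.Prime → (e p).Prime)

include he

lemma F_ne_zero (n : ℕ) : F e n ≠ 0 := by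
  unfold F
  rw [Finsupp.prod]
  apply Finset.prod_ne_zero_iff.2
  intro p hp
  rw [Nat.support_factorization] at hp
  exact pow_ne_zero _ (he p (Nat.prime_of_mem_primeFactors hp)).ne_zero

lemma F_factorization (n : ℕ) :
    (F e n).factorization = n.factorization.mapDomain e := by
  unfold F
  rw [Finsupp.prod, Nat.factorization_prod (fun p hp => by
    rw [Nat.support_factorization] at hp
    exact pow_ne_zero _ (he p (Nat.prime_of_mem_primeFactors hp)).ne_zero)]
  rw [Finsupp.mapDomain, Finsupp.sum]
  apply Finset.sum_congr rfl
  intro p hp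
  rw [Nat.support_factorization] at hp
  rw [Nat.factorization_pow, (he p (Nat.prime_of_mem_primeFactors hp)).factorization]
  ext q
  simp [mul_comm]

omit he in
lemma F_one : F e 1 = 1 := by simp [F]

omit he in
lemma F_mul {m n : ℕ} (hm : m ≠ 0) (hn : n ≠ 0) : F e (m * n) = F e m * F e n := by
  unfold F
  rw [Nat.factorization_mul hm hn]
  exact Finsupp.prod_add_index (fun p _ => pow_zero _) (fun p _ a b => pow_add _ a b)

lemma F_F (hinv : Function.Involutive e) {n : ℕ} (hn : n ≠ 0) : F e (F e n) = n := by
  apply Nat.factorization_inj (Set.mem_setOf.2 (F_ne_zero he _)) (Set.mem_setOf.2 hn)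
  rw [F_factorization he, F_factorization he,
    ← Finsupp.mapDomain_comp, hinv.comp_self, Finsupp.mapDomain_id]

lemma F_primeFactors (hinv : Function.Involutive e) (n : ℕ) :
    (F e n).primeFactors = n.primeFactors.image e := by
  rw [← Nat.support_factorization, F_factorization he,
    Finsupp.mapDomain_support_of_injective hinv.injective, Nat.support_factorization]

/-- `F` as a function on `ℕ+`. -/
noncomputable def Fp (n : ℕ+) : ℕ+ := ⟨F e n, Nat.pos_of_ne_zero (F_ne_zero he n)⟩

variable (hinv : Function.Involutive e)
include hinv

noncomputable def FpEquiv : ℕ+ ≃ ℕ+ :=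
  Function.Involutive.toPerm (Fp he) (fun n => by
    apply PNat.coe_injective
    exact F_F he hinv n.ne_zero)

noncomputable def FpLEquiv : ℕ+ ≃[L] ℕ+ where
  toEquiv := FpEquiv he hinv
  map_fun' {m} f x := by
    match m, f with
    | 0, f =>
      show Fp he 1 = 1
      apply PNat.coe_injective
      exact F_one
    | 2, f =>
      show Fp he (x 0 * x 1) = Fp he (x 0) * Fp he (x 1)
      apply PNat.coe_injective
      exact F_mul (x 0).ne_zero (x 1).ne_zero
  map_rel' {m} r := r.elim

end CRaux

/-- Any satisfiable formula has a realization coprime to any given tuple of parameters. -/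
theorem coprime_realization (n k : ℕ) (φ : L.Formula (Fin n))
    (hφ : ∃ a : Fin n → ℕ+, φ.Realize a) (c : Fin k → ℕ+) :
    ∃ a : Fin n → ℕ+, φ.Realize a ∧
      ∀ p : ℕ+, (p : ℕ).Prime → (∃ i, p ∣ a i) → ¬ ∃ j, p ∣ c j := by
  classical
  obtain ⟨a, ha⟩ := hφ
  -- the prime supports
  set S : Finset ℕ := Finset.univ.biUnion (fun i => ((a i : ℕ)).primeFactors) with hS
  set T : Finset ℕ := Finset.univ.biUnion (fun j => ((c j : ℕ)).primeFactors) with hT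
  have hSp : ∀ x ∈ S, Nat.Prime x := by
    intro x hx
    rw [hS, Finset.mem_biUnion] at hx
    obtain ⟨i, _, hx⟩ := hx
    exact Nat.prime_of_mem_primeFactors hx
  have hTp : ∀ x ∈ T, Nat.Prime x := by
    intro x hx
    rw [hT, Finset.mem_biUnion] at hx
    obtain ⟨j, _, hx⟩ := hx
    exact Nat.prime_of_mem_primeFactors hx
  -- fresh primes
  have hinf : ({p : ℕ | p.Prime} \ ↑(S ∪ T)).Infinite :=
    Nat.infinite_setOf_prime.diff (Finset.finite_toSet _)
  obtain ⟨t, htsub, htcard⟩ := hinf.exists_subset_card_eq (S ∩ T).card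
  have htprime : ∀ x ∈ t, Nat.Prime x := fun x hx => (htsub hx).1
  have htdisj : ∀ x ∈ t, x ∉ S ∪ T := fun x hx => fun h => (htsub hx).2 (by exact_mod_cast h)
  have htST : ∀ x ∈ t, x ∉ S ∩ T := fun x hx h =>
    htdisj x hx (Finset.mem_union_left _ (Finset.mem_inter.1 h).1)
  have hq : (S ∩ T).card = t.card := htcard.symm
  let q : ↥(S ∩ T) ≃ ↥t := Finset.equivOfCardEq hq
  -- the involution
  let e : ℕ → ℕ := fun x =>
    if h : x ∈ S ∩ T then (q ⟨x, h⟩ : ℕ)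
    else if h : x ∈ t then (q.symm ⟨x, h⟩ : ℕ)
    else x
  have he1 : ∀ (x : ℕ) (h : x ∈ S ∩ T), e x = (q ⟨x, h⟩ : ℕ) := fun x h => dif_pos h
  have he2 : ∀ (x : ℕ) (h : x ∈ t), x ∉ S ∩ T → e x = (q.symm ⟨x, h⟩ : ℕ) := by
    intro x h hx
    simp only [e, dif_neg hx, dif_pos h]
  have he3 : ∀ (x : ℕ), x ∉ S ∩ T → x ∉ t → e x = x := by
    intro x h1 h2
    simp only [e, dif_neg h1, dif_neg h2]
  have hinv : Function.Involutive e := by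
    intro x
    by_cases h : x ∈ S ∩ T
    · rw [he1 x h, he2 _ (q ⟨x, h⟩).2 (htST _ (q ⟨x, h⟩).2)]
      simp
    · by_cases h2 : x ∈ t
      · rw [he2 x h2 h, he1 _ (q.symm ⟨x, h2⟩).2]
        simp
      · rw [he3 x h h2, he3 x h h2]
  have he : ∀ p : ℕ, p.Prime → (e p).Prime := by
    intro p hp
    by_cases h : p ∈ S ∩ T
    · rw [he1 p h]; exact htprime _ (q ⟨p, h⟩).2
    · by_cases h2 : p ∈ t
      · rw [he2 p h2 h]; exact hTp _ (Finset.mem_inter.1 (q.symm ⟨p, h2⟩).2).2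
      · rwa [he3 p h h2]
  -- apply the automorphism
  let g := CRaux.FpLEquiv he hinv
  refine ⟨fun i => g (a i), ?_, ?_⟩
  · exact (StrongHomClass.realize_formula g φ).2 ha
  · rintro p hp ⟨i, hpi⟩ ⟨j, hpj⟩
    have hpj' : (p : ℕ) ∈ T := by
      rw [hT, Finset.mem_biUnion]
      exact ⟨j, Finset.mem_univ j, Nat.mem_primeFactors.2 ⟨hp, PNat.dvd_iff.1 hpj, (c j).ne_zero⟩⟩
    have hgd : (p : ℕ) ∣ CRaux.F e (a i) := by
      have h1 : ((g (a i) : ℕ+) : ℕ) = CRaux.F e (a i) := rfl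
      exact h1 ▸ PNat.dvd_iff.1 hpi
    have hpi' : (p : ℕ) ∈ (CRaux.F e (a i)).primeFactors :=
      Nat.mem_primeFactors.2 ⟨hp, hgd, CRaux.F_ne_zero he _⟩
    rw [CRaux.F_primeFactors he hinv, Finset.mem_image] at hpi'
    obtain ⟨p', hp'mem, hp'eq⟩ := hpi'
    have hp'S : p' ∈ S := by
      rw [hS, Finset.mem_biUnion]; exact ⟨i, Finset.mem_univ i, hp'mem⟩
    by_cases h : p' ∈ S ∩ T
    · rw [he1 p' h] at hp'eq
      exact htdisj _ (hp'eq ▸ (q ⟨p', h⟩).2) (Finset.mem_union_right _ hpj')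
    · have hp't : p' ∉ t := fun ht => htdisj _ ht (Finset.mem_union_left _ hp'S)
      rw [he3 p' h hp't] at hp'eq
      rw [← hp'eq] at hpj'
      exact h (Finset.mem_inter.2 ⟨hp'S, hpj'⟩)
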